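/- Let A ∈ ℝ^{m×n}, and suppose M_1 = P_{k+1} B_{k+} Q_k^T and M_2 = P_k B_k Q_k^T where P_{k+1} ∈ ℝ^{m×(k+1)} and Q_k ∈ ℝ^{n×k} have orthonormal columns, B_{k+} ∈ ℝ^{(k+1)×k} is lower bidiagonal, B_k is B_{k+} with its last row deleted, and P_k consists of the first k columns of P_{k+1}. Then ‖A − M_2‖₂ ≥ ‖A − M_1‖₂; i.e., the rank-k approximation P_k B_k Q_k^T to A is no more accurate (in spectral norm) than P_{k+1} B_{k+} Q_k^T. -/

import Mathlib

open Matrix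

/-- Euclidean norm of a vector. -/
noncomputable def enorm {n : ℕ} (v : Fin n → ℝ) : ℝ := Real.sqrt (∑ i, v i ^ 2)

/-- Spectral norm (largest singular value) of a matrix. -/
noncomputable def specNorm {p n : ℕ} (M : Matrix (Fin p) (Fin n) ℝ) : ℝ :=
  sSup {t | ∃ v : Fin n → ℝ, _root_.enorm v = 1 ∧ t = _root_.enorm (M.mulVec v)}

/-- Smallest singular value of a matrix (with at least as many rows as columns). -/
noncomputable def sigmaMin {p n : ℕ} (M : Matrix (Fin p) (Fin n) ℝ) : ℝ :=
  sInf {t | ∃ v : Fin n → ℝ, _root_.enorm v = 1 ∧ t = _root_.enorm (M.mulVec v)}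

/-- `t` is a singular value of `M`, i.e. `t ^ 2` is an eigenvalue of `Mᵀ * M`. -/
def IsSingVal {p n : ℕ} (M : Matrix (Fin p) (Fin n) ℝ) (t : ℝ) : Prop :=
  ∃ v : Fin n → ℝ, v ≠ 0 ∧ (Mᵀ * M).mulVec v = (t ^ 2) • v

lemma enorm_nonneg' {n : ℕ} (v : Fin n → ℝ) : 0 ≤ _root_.enorm v := Real.sqrt_nonneg _

lemma enorm_smul' {n : ℕ} (c : ℝ) (v : Fin n → ℝ) : _root_.enorm (c • v) = |c| * _root_.enorm v := by
  unfold _root_.enorm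
  have : ∑ i, (c • v) i ^ 2 = c ^ 2 * ∑ i, v i ^ 2 := by
    simp [Pi.smul_apply, smul_eq_mul, mul_pow, Finset.mul_sum]
  rw [this, Real.sqrt_mul (sq_nonneg c), Real.sqrt_sq_eq_abs]

lemma enorm_pos_of_ne_zero {n : ℕ} {v : Fin n → ℝ} (hv : v ≠ 0) : 0 < _root_.enorm v := by
  apply Real.sqrt_pos.2
  obtain ⟨i, hi⟩ := Function.ne_iff.1 hv
  exact Finset.sum_pos' (fun j _ => sq_nonneg _)
    ⟨i, Finset.mem_univ i, pow_pos (abs_pos.2 hi) 2 |>.trans_eq (sq_abs _)⟩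

lemma mulVec_enorm_le {p n : ℕ} (M : Matrix (Fin p) (Fin n) ℝ) (v : Fin n → ℝ) :
    _root_.enorm (M.mulVec v) ≤ Real.sqrt (∑ i, ∑ j, M i j ^ 2) * _root_.enorm v := by
  unfold _root_.enorm
  rw [← Real.sqrt_mul (by positivity)]
  apply Real.sqrt_le_sqrt
  calc ∑ i, M.mulVec v i ^ 2
      ≤ ∑ i, ((∑ j, M i j ^ 2) * ∑ j, v j ^ 2) := by
        refine Finset.sum_le_sum fun i _ => ?_
        simpa [Matrix.mulVec, dotProduct] using
          Finset.sum_mul_sq_le_sq_mul_sq Finset.univ (fun j => M i j) v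
    _ = (∑ i, ∑ j, M i j ^ 2) * ∑ j, v j ^ 2 := by rw [← Finset.sum_mul]

lemma bddAbove_specSet {p n : ℕ} (M : Matrix (Fin p) (Fin n) ℝ) :
    BddAbove {t | ∃ v : Fin n → ℝ, _root_.enorm v = 1 ∧ t = _root_.enorm (M.mulVec v)} := by
  refine ⟨Real.sqrt (∑ i, ∑ j, M i j ^ 2), ?_⟩
  rintro t ⟨v, hv, rfl⟩
  simpa [hv] using mulVec_enorm_le M v

theorem stmt8 {m n k : ℕ}
    (A : Matrix (Fin m) (Fin n) ℝ)
    (Pk1 : Matrix (Fin m) (Fin (k + 1)) ℝ) (Qk : Matrix (Fin n) (Fin k) ℝ)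
    (Bp : Matrix (Fin (k + 1)) (Fin k) ℝ)
    (hP : Pk1ᵀ * Pk1 = 1) (hQ : Qkᵀ * Qk = 1)
    (hbidiag : ∀ (i : Fin (k + 1)) (j : Fin k), i ≠ j.castSucc → i ≠ j.succ → Bp i j = 0)
    -- Golub–Kahan relations
    (hGK1 : A * Qk = Pk1 * Bp)
    (hGK2 : Aᵀ * (Pk1.submatrix id Fin.castSucc) = Qk * (Bp.submatrix Fin.castSucc id)ᵀ) :
    specNorm (A - Pk1 * Bp * Qkᵀ) ≤
      specNorm (A - (Pk1.submatrix id Fin.castSucc) * (Bp.submatrix Fin.castSucc id) * Qkᵀ) := by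
  set M1 : Matrix (Fin m) (Fin n) ℝ := Pk1 * Bp * Qkᵀ with hM1
  set M2 : Matrix (Fin m) (Fin n) ℝ :=
    (Pk1.submatrix id Fin.castSucc) * (Bp.submatrix Fin.castSucc id) * Qkᵀ with hM2
  set S2 := {t | ∃ v : Fin n → ℝ, _root_.enorm v = 1 ∧ t = _root_.enorm ((A - M2).mulVec v)} with hS2
  have hbdd : BddAbove S2 := bddAbove_specSet _
  have hS2nn : 0 ≤ sSup S2 := Real.sSup_nonneg (by rintro t ⟨v, hv, rfl⟩; exact enorm_nonneg' _)
  -- key fact: (A - M1) * Qk = 0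
  have hA1Q : (A - M1) * Qk = 0 := by
    rw [Matrix.sub_mul, hGK1, Matrix.mul_assoc (Pk1 * Bp) Qkᵀ Qk, hQ, Matrix.mul_one, sub_self]
  apply Real.sSup_le _ hS2nn
  rintro t ⟨v, hv, rfl⟩
  set w := Qkᵀ.mulVec v with hw
  set z := v - Qk.mulVec w with hzdef
  have hQz : Qkᵀ.mulVec z = 0 := by
    rw [hzdef, Matrix.mulVec_sub, Matrix.mulVec_mulVec, hQ, Matrix.one_mulVec, sub_self]
  -- (A - M1).mulVec v = (A - M2).mulVec z
  have hkey : (A - M1).mulVec v = (A - M2).mulVec z := by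
    have h1 : (A - M1).mulVec v = (A - M1).mulVec z := by
      rw [hzdef, Matrix.mulVec_sub, Matrix.mulVec_mulVec, hA1Q, Matrix.zero_mulVec, sub_zero]
    have h2 : (A - M1).mulVec z = (A - M2).mulVec z := by
      have : (A - M1) = (A - M2) - (Pk1 * Bp - (Pk1.submatrix id Fin.castSucc) *
          (Bp.submatrix Fin.castSucc id)) * Qkᵀ := by
        rw [hM1, hM2, Matrix.sub_mul]; abel
      rw [this, Matrix.sub_mulVec, ← Matrix.mulVec_mulVec, hQz, Matrix.mulVec_zero, sub_zero]
    rw [h1, h2]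
  rw [hkey]
  -- norm of z is at most 1
  have hdotv : v ⬝ᵥ v = 1 := by
    have := hv
    unfold _root_.enorm at this
    have hs : ∑ i, v i ^ 2 = 1 := by
      have h0 : (0:ℝ) ≤ ∑ i, v i ^ 2 := Finset.sum_nonneg fun i _ => sq_nonneg _
      nlinarith [Real.sq_sqrt h0]
    simpa [dotProduct, sq] using hs
  have hQwz : (Qk.mulVec w) ⬝ᵥ z = 0 := by
    rw [dotProduct_comm, Matrix.dotProduct_mulVec, ← Matrix.mulVec_transpose, hQz,
      zero_dotProduct]
  have hvQw : v ⬝ᵥ Qk.mulVec w = w ⬝ᵥ w := by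
    rw [Matrix.dotProduct_mulVec, ← Matrix.mulVec_transpose, ← hw]
  have hzz : z ⬝ᵥ z = 1 - w ⬝ᵥ w := by
    have : z ⬝ᵥ z = v ⬝ᵥ z - (Qk.mulVec w) ⬝ᵥ z := by rw [hzdef, sub_dotProduct]
    rw [this, hQwz, sub_zero, hzdef, dotProduct_sub, hdotv, hvQw]
  have hww : 0 ≤ w ⬝ᵥ w := by
    simpa [dotProduct, ← sq] using
      Finset.sum_nonneg (fun i (_ : i ∈ Finset.univ) => sq_nonneg (w i))
  have hznorm : _root_.enorm z ≤ 1 := by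
    unfold _root_.enorm
    rw [show ∑ i, z i ^ 2 = z ⬝ᵥ z by simp [dotProduct, sq]]
    rw [hzz]
    calc Real.sqrt (1 - w ⬝ᵥ w) ≤ Real.sqrt 1 := Real.sqrt_le_sqrt (by linarith)
      _ = 1 := Real.sqrt_one
  -- conclude
  by_cases hz0 : z = 0
  · simp only [hz0, Matrix.mulVec_zero]
    have : _root_.enorm (0 : Fin m → ℝ) = 0 := by unfold _root_.enorm; simp
    rw [this]; exact hS2nn
  · have hc : 0 < _root_.enorm z := enorm_pos_of_ne_zero hz0
    set u := (_root_.enorm z)⁻¹ • z with hu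
    have hunorm : _root_.enorm u = 1 := by
      rw [hu, enorm_smul', abs_of_pos (by positivity), inv_mul_cancel₀ (ne_of_gt hc)]
    have hzu : z = (_root_.enorm z) • u := by
      rw [hu, smul_smul, mul_inv_cancel₀ (ne_of_gt hc), one_smul]
    have hmem : _root_.enorm ((A - M2).mulVec u) ∈ S2 := ⟨u, hunorm, rfl⟩
    have hle : _root_.enorm ((A - M2).mulVec u) ≤ sSup S2 := le_csSup hbdd hmem
    have hfac : _root_.enorm ((A - M2).mulVec z) = _root_.enorm z * _root_.enorm ((A - M2).mulVec u) := by
      conv_lhs => rw [hzu]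
      rw [Matrix.mulVec_smul, enorm_smul', abs_of_pos hc]
    calc _root_.enorm ((A - M2).mulVec z) = _root_.enorm z * _root_.enorm ((A - M2).mulVec u) := hfac
      _ ≤ 1 * sSup S2 := by
          exact mul_le_mul hznorm hle (enorm_nonneg' _) zero_le_one
      _ = sSup S2 := one_mul _
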